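/- There exists an absolute constant c′ ∈ (0,1) such that for all integers 1 ≤ r ≤ k ≤ c′·p₁ with r ≤ p₂ and every ε > 0, there exists a finite set 𝕏″ of real p₁×p₂ matrices with the following properties: (i) every X ∈ 𝕏″ has at most k nonzero rows, rank(X) ≤ r, and ‖X‖_F = ε; (ii) log|𝕏″| ≥ (4/25)·k·log(p₁/k) + (3/25)·r·k; (iii) ‖X₁ − X₂‖_F ≥ ε/2 for all distinct X₁, X₂ ∈ 𝕏″. -/

import Mathlib

noncomputable section
open MeasureTheory

/-- Frobenius norm of a real matrix. -/
def frobNorm {a b : ℕ} (X : Matrix (Fin a) (Fin b) ℝ) : ℝ :=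
  Real.sqrt (∑ i, ∑ j, (X i j) ^ 2)

/-- Euclidean norm of a vector. -/
def l2Norm {n : ℕ} (v : Fin n → ℝ) : ℝ :=
  Real.sqrt (∑ i, (v i) ^ 2)

/-- Sum of Euclidean norms of the rows (ℓ_{1,2} norm). -/
def l12Norm {a b : ℕ} (X : Matrix (Fin a) (Fin b) ℝ) : ℝ :=
  ∑ i, Real.sqrt (∑ j, (X i j) ^ 2)

/-- Nuclear norm: sum of the singular values of `X`. -/
def nuclearNorm {a b : ℕ} (X : Matrix (Fin a) (Fin b) ℝ) : ℝ :=
  ∑ i, Real.sqrt ((Matrix.isHermitian_conjTranspose_mul_self X).eigenvalues i)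

/-- Spectral norm (ℓ₂ operator norm). -/
def specNorm {a b : ℕ} (X : Matrix (Fin a) (Fin b) ℝ) : ℝ :=
  sSup ((fun v => l2Norm (X.mulVec v)) '' {v | l2Norm v ≤ 1})

/-- Number of nonzero rows. -/
def rowSparsity {a b : ℕ} (X : Matrix (Fin a) (Fin b) ℝ) : ℕ :=
  {i | X i ≠ 0}.ncard

/-- The set 𝕏_{k,r} of matrices with at most `k` nonzero rows and rank at most `r`. -/
def sparseLowRank (p₁ p₂ k r : ℕ) : Set (Matrix (Fin p₁) (Fin p₂) ℝ) :=
  {X | rowSparsity X ≤ k ∧ X.rank ≤ r}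

/-- Gaussian measure on ℝⁿ with mean `μ` and covariance `σ² Iₙ`. -/
def gaussianPi (n : ℕ) (μ : Fin n → ℝ) (σ : ℝ) : Measure (Fin n → ℝ) :=
  Measure.pi fun i => ProbabilityTheory.gaussianReal (μ i) (Real.toNNReal (σ ^ 2))

section AuxPacking
open Finset

lemma sum_choose_le (n m : ℕ) (hm : 1 ≤ m) (hmn : m ≤ n) :
    (∑ i ∈ Finset.range (m+1), (n.choose i : ℝ)) ≤ ((n:ℝ)/m)^m * Real.exp m := by
  have hn0 : 0 < n := by omega
  have hn : 0 < (n:ℝ) := by exact_mod_cast hn0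
  have hm' : 0 < (m:ℝ) := by exact_mod_cast hm
  set x : ℝ := (m:ℝ)/n with hx
  have hx0 : 0 < x := by positivity
  have hx1 : x ≤ 1 := by
    rw [hx, div_le_one hn]; exact_mod_cast hmn
  have key : (∑ i ∈ Finset.range (m+1), (n.choose i : ℝ)) * x^m
      ≤ Real.exp m := by
    calc (∑ i ∈ Finset.range (m+1), (n.choose i : ℝ)) * x^m
        = ∑ i ∈ Finset.range (m+1), (n.choose i : ℝ) * x^m := by rw [Finset.sum_mul]
      _ ≤ ∑ i ∈ Finset.range (m+1), x^i * 1^(n-i) * (n.choose i : ℝ) := by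
          apply Finset.sum_le_sum
          intro i hi
          rw [Finset.mem_range] at hi
          have : x ^ m ≤ x ^ i := pow_le_pow_of_le_one hx0.le hx1 (by omega)
          rw [one_pow, mul_one]
          calc (n.choose i : ℝ) * x^m ≤ (n.choose i : ℝ) * x^i := by
                apply mul_le_mul_of_nonneg_left this (by positivity)
            _ = x ^ i * (n.choose i : ℝ) := by ring
      _ ≤ ∑ i ∈ Finset.range (n+1), x^i * 1^(n-i) * (n.choose i : ℝ) := by
          apply Finset.sum_le_sum_of_subset_of_nonneg
          · exact Finset.range_subset_range.2 (by omega)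
          · intro i _ _; positivity
      _ = (x + 1)^n := (add_pow x 1 n).symm
      _ ≤ (Real.exp x)^n := by
          apply pow_le_pow_left₀ (by positivity) _ n
          linarith [Real.add_one_le_exp x]
      _ = Real.exp m := by
          rw [← Real.exp_nat_mul, hx, mul_div_cancel₀]
          exact hn.ne'
  have hxm : 0 < x ^ m := by positivity
  rw [← le_div_iff₀ hxm] at key
  calc (∑ i ∈ Finset.range (m+1), (n.choose i : ℝ)) ≤ Real.exp m / x^m := key
    _ = ((n:ℝ)/m)^m * Real.exp m := by
        rw [hx, div_pow, div_div_eq_mul_div, div_pow]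
        ring

lemma pow_div_le_choose : ∀ (k : ℕ), 1 ≤ k → ∀ (n : ℕ), k ≤ n → ((n:ℝ)/k)^k ≤ (n.choose k : ℝ) := by
  intro k
  induction k with
  | zero => omega
  | succ k ih =>
    intro _ n hkn
    rcases Nat.eq_zero_or_pos k with hk0 | hk1
    · subst hk0
      rw [pow_one, Nat.choose_one_right, Nat.cast_one, div_le_iff₀ (by norm_num : (0:ℝ) < 1)]
      simp
    · have hn1 : 1 ≤ n := by omega
      have hkn' : k ≤ n - 1 := by omega
      have hk' : 0 < (k:ℝ) := by exact_mod_cast hk1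
      have ihn := ih hk1 (n-1) hkn'
      have hid : (n:ℝ) * ((n-1).choose k : ℝ) = ((n.choose (k+1)) : ℝ) * ((k:ℝ)+1) := by
        have h := Nat.add_one_mul_choose_eq (n-1) k
        have hn : n - 1 + 1 = n := by omega
        rw [hn] at h
        have := congrArg (fun t : ℕ => (t:ℝ)) h
        push_cast at this
        linarith [this]
      have hc : ((n-1:ℕ):ℝ) = (n:ℝ) - 1 := by
        rw [Nat.cast_sub hn1]; norm_num
      have hstep : ((n:ℝ)/((k:ℝ)+1)) * (((n:ℝ)-1)/k)^k ≤ (n.choose (k+1) : ℝ) := by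
        rw [← hc]
        have h2 : ((n:ℝ)/((k:ℝ)+1)) * (((n-1:ℕ):ℝ)/k)^k ≤ ((n:ℝ)/((k:ℝ)+1)) * ((n-1).choose k : ℝ) :=
          mul_le_mul_of_nonneg_left ihn (by positivity)
        refine h2.trans ?_
        rw [div_mul_eq_mul_div, div_le_iff₀ (by positivity)]
        linarith [hid]
      refine le_trans ?_ hstep
      have hcast : ((k+1:ℕ):ℝ) = (k:ℝ)+1 := by push_cast; ring
      rw [hcast, pow_succ]
      have h1 : ((n:ℝ)/((k:ℝ)+1)) ≤ ((n:ℝ)-1)/k := by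
        rw [div_le_div_iff₀ (by positivity) (by positivity)]
        have : (k:ℝ) + 1 ≤ n := by exact_mod_cast hkn
        nlinarith
      have h2 : ((n:ℝ)/((k:ℝ)+1))^k ≤ (((n:ℝ)-1)/k)^k :=
        pow_le_pow_left₀ (by positivity) h1 k
      calc ((n:ℝ)/((k:ℝ)+1))^k * ((n:ℝ)/((k:ℝ)+1)) ≤ (((n:ℝ)-1)/k)^k * ((n:ℝ)/((k:ℝ)+1)) :=
            mul_le_mul_of_nonneg_right h2 (by positivity)
        _ = ((n:ℝ)/((k:ℝ)+1)) * (((n:ℝ)-1)/k)^k := by ring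

lemma exists_packing {α : Type*} [DecidableEq α] (V : Finset α) (near : α → α → Prop)
    [DecidableRel near] (hsymm : ∀ x y, near x y → near y x) (hrefl : ∀ x, near x x)
    (B : ℕ) (hB : ∀ x ∈ V, (V.filter (fun y => near x y)).card ≤ B) :
    ∃ C : Finset α, C ⊆ V ∧ (∀ x ∈ C, ∀ y ∈ C, x ≠ y → ¬ near x y) ∧ V.card ≤ C.card * B := by
  classical
  set P : Finset (Finset α) :=
    V.powerset.filter (fun C => ∀ x ∈ C, ∀ y ∈ C, x ≠ y → ¬ near x y) with hP
  have hne : P.Nonempty := ⟨∅, by simp [hP]⟩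
  obtain ⟨C, hCP, hmax⟩ := P.exists_max_image Finset.card hne
  rw [hP, Finset.mem_filter, Finset.mem_powerset] at hCP
  obtain ⟨hCV, hsep⟩ := hCP
  refine ⟨C, hCV, hsep, ?_⟩
  have hcover : ∀ v ∈ V, ∃ c ∈ C, near c v := by
    intro v hv
    by_contra hno
    push_neg at hno
    have hvC : v ∉ C := fun h => hno v h (hrefl v)
    have hins : insert v C ∈ P := by
      rw [hP, Finset.mem_filter, Finset.mem_powerset]
      constructor
      · exact Finset.insert_subset hv hCV
      · intro x hx y hy hxy
        rw [Finset.mem_insert] at hx hy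
        rcases hx with rfl | hx
        · rcases hy with rfl | hy
          · exact absurd rfl hxy
          · exact fun h => hno y hy (hsymm x y h)
        · rcases hy with rfl | hy
          · exact fun h => hno x hx h
          · exact hsep x hx y hy hxy
    have := hmax _ hins
    rw [Finset.card_insert_of_notMem hvC] at this
    omega
  have hsub : V ⊆ C.biUnion (fun c => V.filter (fun y => near c y)) := by
    intro v hv
    obtain ⟨c, hc, hnear⟩ := hcover v hv
    exact Finset.mem_biUnion.2 ⟨c, hc, Finset.mem_filter.2 ⟨hv, hnear⟩⟩
  calc V.card ≤ (C.biUnion (fun c => V.filter (fun y => near c y))).card :=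
        Finset.card_le_card hsub
    _ ≤ ∑ c ∈ C, (V.filter (fun y => near c y)).card := Finset.card_biUnion_le
    _ ≤ C.card * B := by
        rw [← smul_eq_mul]
        exact Finset.sum_le_card_nsmul C _ B (fun c hc => hB c (hCV hc))

lemma card_small_subsets_le {γ : Type*} [DecidableEq γ] (s : Finset γ) (m : ℕ) :
    ((s.powerset.filter (fun A => A.card ≤ m)).card : ℕ)
      ≤ ∑ i ∈ Finset.range (m+1), s.card.choose i := by
  have hsub : s.powerset.filter (fun A => A.card ≤ m)
      ⊆ (Finset.range (m+1)).biUnion (fun i => Finset.powersetCard i s) := by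
    intro A hA
    rw [Finset.mem_filter, Finset.mem_powerset] at hA
    exact Finset.mem_biUnion.2 ⟨A.card, Finset.mem_range.2 (by omega),
      Finset.mem_powersetCard.2 ⟨hA.1, rfl⟩⟩
  calc (s.powerset.filter (fun A => A.card ≤ m)).card
      ≤ ((Finset.range (m+1)).biUnion (fun i => Finset.powersetCard i s)).card :=
        Finset.card_le_card hsub
    _ ≤ ∑ i ∈ Finset.range (m+1), (Finset.powersetCard i s).card := Finset.card_biUnion_le
    _ = ∑ i ∈ Finset.range (m+1), s.card.choose i := by
        simp [Finset.card_powersetCard]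

lemma support_ball_le (p k s : ℕ) (S : Finset (Fin p)) (hS : S.card = k) :
    (((Finset.powersetCard k (Finset.univ : Finset (Fin p))).filter
        (fun T => (S \ T).card ≤ s ∧ (T \ S).card ≤ s)).card : ℕ)
      ≤ (∑ i ∈ Finset.range (s+1), k.choose i) * (∑ i ∈ Finset.range (s+1), p.choose i) := by
  classical
  set T1 := S.powerset.filter (fun A => A.card ≤ s) with hT1
  set T2 := (Finset.univ : Finset (Fin p)).powerset.filter (fun A => A.card ≤ s) with hT2
  have h1 : T1.card ≤ ∑ i ∈ Finset.range (s+1), k.choose i := by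
    have := card_small_subsets_le S s
    rwa [hS] at this
  have h2 : T2.card ≤ ∑ i ∈ Finset.range (s+1), p.choose i := by
    have := card_small_subsets_le (Finset.univ : Finset (Fin p)) s
    rwa [Finset.card_univ, Fintype.card_fin] at this
  have hmain : (((Finset.powersetCard k (Finset.univ : Finset (Fin p))).filter
        (fun T => (S \ T).card ≤ s ∧ (T \ S).card ≤ s)).card : ℕ) ≤ (T1 ×ˢ T2).card := by
    apply Finset.card_le_card_of_injOn (fun T => (S \ T, T \ S))
    · intro T hT
      rw [Finset.mem_coe, Finset.mem_filter] at hT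
      rw [Finset.mem_coe, Finset.mem_product]
      constructor
      · rw [hT1, Finset.mem_filter, Finset.mem_powerset]
        exact ⟨Finset.sdiff_subset, hT.2.1⟩
      · rw [hT2, Finset.mem_filter, Finset.mem_powerset]
        exact ⟨Finset.subset_univ _, hT.2.2⟩
    · intro T hT U hU hTU
      dsimp only at hTU
      have e1 : S \ T = S \ U := congrArg Prod.fst hTU
      have e2 : T \ S = U \ S := congrArg Prod.snd hTU
      have hTid : T = (S \ (S \ T)) ∪ (T \ S) := by
        rw [Finset.sdiff_sdiff_self_left]
        ext a
        simp only [Finset.mem_union, Finset.mem_inter, Finset.mem_sdiff]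
        tauto
      have hUid : U = (S \ (S \ U)) ∪ (U \ S) := by
        rw [Finset.sdiff_sdiff_self_left]
        ext a
        simp only [Finset.mem_union, Finset.mem_inter, Finset.mem_sdiff]
        tauto
      rw [hTid, hUid, e1, e2]
  refine hmain.trans ?_
  rw [Finset.card_product]
  exact Nat.mul_le_mul h1 h2

lemma hamming_ball_le {ι : Type*} [Fintype ι] [DecidableEq ι] (m : ℕ) (x : ι → Bool) :
    ((Finset.univ.filter (fun y : ι → Bool => hammingDist x y ≤ m)).card : ℕ)
      ≤ ∑ i ∈ Finset.range (m+1), (Fintype.card ι).choose i := by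
  classical
  set T := ((Finset.univ : Finset ι).powerset.filter (fun A => A.card ≤ m)) with hT
  have hcard : T.card ≤ ∑ i ∈ Finset.range (m+1), (Fintype.card ι).choose i := by
    have := card_small_subsets_le (Finset.univ : Finset ι) m
    rwa [Finset.card_univ] at this
  refine le_trans ?_ hcard
  apply Finset.card_le_card_of_injOn (fun y => Finset.univ.filter (fun j => x j ≠ y j))
  · intro y hy
    rw [Finset.mem_coe, Finset.mem_filter] at hy
    rw [Finset.mem_coe, hT, Finset.mem_filter, Finset.mem_powerset]
    exact ⟨Finset.subset_univ _, by rw [← hammingDist]; exact hy.2⟩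
  · intro y _ z _ hyz
    dsimp only at hyz
    funext j
    have hmem : (x j ≠ y j) ↔ (x j ≠ z j) := by
      constructor <;> intro h
      · have hjm : j ∈ Finset.univ.filter (fun j => x j ≠ y j) := by simp [h]
        rw [hyz, Finset.mem_filter] at hjm
        exact hjm.2
      · have hjm : j ∈ Finset.univ.filter (fun j => x j ≠ z j) := by simp [h]
        rw [← hyz, Finset.mem_filter] at hjm
        exact hjm.2
    cases hx : x j <;> cases hy : y j <;> cases hz : z j <;> simp_all



def bmat {p₁ p₂ : ℕ} (k r : ℕ) (a : ℝ) (S : Finset (Fin p₁)) (hS : S.card = k)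
    (σ : Fin k × Fin r → Bool) : Matrix (Fin p₁) (Fin p₂) ℝ :=
  fun i j => if hi : i ∈ S then
    (if hj : (j:ℕ) < r then
      (if σ ((S.orderIsoOfFin hS).symm ⟨i, hi⟩, ⟨(j:ℕ), hj⟩) then a else -a) else 0)
    else 0

section props
variable {p₁ p₂ : ℕ} {k r : ℕ} {a : ℝ} {S : Finset (Fin p₁)} {hS : S.card = k}
  {σ : Fin k × Fin r → Bool}

lemma bmat_sq (i : Fin p₁) (j : Fin p₂) :
    (bmat k r a S hS σ i j)^2 = if i ∈ S ∧ (j:ℕ) < r then a^2 else 0 := by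
  unfold bmat
  by_cases hi : i ∈ S <;> by_cases hj : (j:ℕ) < r <;>
    simp only [hi, hj, dif_pos, dif_neg, not_false_iff, and_true, and_false, if_true,
      if_false, true_and, false_and] <;> try ring
  split_ifs <;> ring

lemma col_filter_card (hrp : r ≤ p₂) :
    (Finset.univ.filter (fun j : Fin p₂ => (j:ℕ) < r)).card = r := by
  rw [← Fintype.card_subtype]
  have e : {j : Fin p₂ // (j:ℕ) < r} ≃ Fin r :=
    { toFun := fun x => ⟨(x.1 : ℕ), x.2⟩
      invFun := fun j => ⟨Fin.castLE hrp j, j.2⟩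
      left_inv := fun x => by ext; rfl
      right_inv := fun j => by ext; rfl }
  rw [Fintype.card_congr e, Fintype.card_fin]

lemma bmat_row_sum (hrp : r ≤ p₂) (i : Fin p₁) :
    ∑ j : Fin p₂, (bmat k r a S hS σ i j)^2 = if i ∈ S then r * a^2 else 0 := by
  by_cases hi : i ∈ S
  · rw [if_pos hi]
    calc ∑ j : Fin p₂, (bmat k r a S hS σ i j)^2
        = ∑ j : Fin p₂, (if (j:ℕ) < r then a^2 else 0) := by
          apply Finset.sum_congr rfl
          intro j _
          rw [bmat_sq]
          simp [hi]
      _ = (Finset.univ.filter (fun j : Fin p₂ => (j:ℕ) < r)).card • a^2 := by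
          rw [Finset.sum_ite, Finset.sum_const, Finset.sum_const_zero, add_zero]
      _ = r * a^2 := by rw [col_filter_card hrp]; simp
  · rw [if_neg hi]
    apply Finset.sum_eq_zero
    intro j _
    rw [bmat_sq]
    simp [hi]

lemma bmat_frob_sq (hrp : r ≤ p₂) :
    ∑ i : Fin p₁, ∑ j : Fin p₂, (bmat k r a S hS σ i j)^2 = (k:ℝ) * r * a^2 := by
  calc ∑ i : Fin p₁, ∑ j : Fin p₂, (bmat k r a S hS σ i j)^2
      = ∑ i : Fin p₁, (if i ∈ S then (r:ℝ) * a^2 else 0) := by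
        exact Finset.sum_congr rfl (fun i _ => bmat_row_sum hrp i)
    _ = S.card • ((r:ℝ) * a^2) := by
        rw [Finset.sum_ite_mem, Finset.univ_inter, Finset.sum_const]
    _ = (k:ℝ) * r * a^2 := by rw [hS]; push_cast; ring

lemma bmat_row_ne_zero (hr1 : 1 ≤ r) (hrp : r ≤ p₂) (ha : a ≠ 0) {i : Fin p₁} (hi : i ∈ S) :
    bmat (p₂ := p₂) k r a S hS σ i ≠ 0 := by
  intro h
  have h0 : (0:ℕ) < p₂ := by omega
  have := congrFun h ⟨0, h0⟩
  unfold bmat at this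
  rw [dif_pos hi, dif_pos (by simpa using (Nat.pos_of_ne_zero (by omega : r ≠ 0)))] at this
  simp only [Pi.zero_apply] at this
  split_ifs at this <;> simp_all

lemma bmat_row_zero {i : Fin p₁} (hi : i ∉ S) :
    bmat (p₂ := p₂) k r a S hS σ i = 0 := by
  funext j
  unfold bmat
  rw [dif_neg hi]
  rfl

lemma rank_le_of_cols_zero (hrp : r ≤ p₂) (X : Matrix (Fin p₁) (Fin p₂) ℝ)
    (hX : ∀ (i : Fin p₁) (j : Fin p₂), r ≤ (j:ℕ) → X i j = 0) : X.rank ≤ r := by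
  classical
  set E : Matrix (Fin r) (Fin p₂) ℝ := fun j' j => if (j':ℕ) = (j:ℕ) then 1 else 0 with hE
  set Y : Matrix (Fin p₁) (Fin r) ℝ := fun i j' => X i (Fin.castLE hrp j') with hY
  have hXY : X = Y * E := by
    ext i j
    rw [Matrix.mul_apply]
    by_cases hj : (j:ℕ) < r
    · rw [Finset.sum_eq_single_of_mem (⟨(j:ℕ), hj⟩ : Fin r) (Finset.mem_univ _)]
      · have hc : Fin.castLE hrp (⟨(j:ℕ), hj⟩ : Fin r) = j := rfl
        rw [hY, hE]
        simp only [hc]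
        norm_num
      · intro j' _ hj'
        rw [hE]
        have hne : ((j':Fin r):ℕ) ≠ ((j : Fin p₂):ℕ) := fun hc => hj' (Fin.ext hc)
        simp only [hne, if_false, mul_zero]
    · rw [hX i j (by omega)]
      symm
      apply Finset.sum_eq_zero
      intro j' _
      rw [hE]
      have hne : ((j':Fin r):ℕ) ≠ ((j : Fin p₂):ℕ) := by
        have := j'.2
        omega
      simp only [hne, if_false, mul_zero]
  calc X.rank = (Y * E).rank := by rw [hXY]
    _ ≤ Y.rank := Matrix.rank_mul_le_left Y E
    _ ≤ Fintype.card (Fin r) := Matrix.rank_le_card_width Y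
    _ = r := Fintype.card_fin r

end props

section dist
variable {p₁ p₂ : ℕ} {k r : ℕ} {a : ℝ}

-- distance when supports differ
lemma bmat_dist_supports (hrp : r ≤ p₂) (S T : Finset (Fin p₁)) (hS : S.card = k)
    (hT : T.card = k) (σ τ : Fin k × Fin r → Bool) :
    ∑ i : Fin p₁, ∑ j : Fin p₂,
        ((bmat (p₂ := p₂) k r a S hS σ - bmat (p₂ := p₂) k r a T hT τ) i j)^2
      ≥ (((S \ T).card + (T \ S).card : ℕ) : ℝ) * r * a^2 := by
  classical
  set X := bmat (p₂ := p₂) k r a S hS σ with hX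
  set Y := bmat (p₂ := p₂) k r a T hT τ with hYd
  have hrow : ∀ i ∈ (S \ T) ∪ (T \ S), ∑ j : Fin p₂, ((X - Y) i j)^2 = r * a^2 := by
    intro i hi
    rw [Finset.mem_union] at hi
    rcases hi with hi | hi
    · rw [Finset.mem_sdiff] at hi
      have : ∀ j : Fin p₂, (X - Y) i j = X i j := by
        intro j
        have hz := bmat_row_zero (p₂ := p₂) (k := k) (r := r) (a := a) (hS := hT) (σ := τ) hi.2
        have hz' : Y i j = 0 := by rw [hYd]; exact congrFun hz j
        rw [Matrix.sub_apply, hz', sub_zero]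
      calc ∑ j : Fin p₂, ((X - Y) i j)^2 = ∑ j : Fin p₂, (X i j)^2 := by
            exact Finset.sum_congr rfl (fun j _ => by rw [this j])
        _ = if i ∈ S then (r:ℝ) * a^2 else 0 := bmat_row_sum hrp i
        _ = r * a^2 := by rw [if_pos hi.1]
    · rw [Finset.mem_sdiff] at hi
      have : ∀ j : Fin p₂, (X - Y) i j = - Y i j := by
        intro j
        have hz := bmat_row_zero (p₂ := p₂) (k := k) (r := r) (a := a) (hS := hS) (σ := σ) hi.2
        have hz' : X i j = 0 := by rw [hX]; exact congrFun hz j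
        rw [Matrix.sub_apply, hz', zero_sub]
      calc ∑ j : Fin p₂, ((X - Y) i j)^2 = ∑ j : Fin p₂, (Y i j)^2 := by
            refine Finset.sum_congr rfl (fun j _ => ?_)
            rw [this j]
            ring
        _ = if i ∈ T then (r:ℝ) * a^2 else 0 := bmat_row_sum hrp i
        _ = r * a^2 := by rw [if_pos hi.1]
  calc ∑ i : Fin p₁, ∑ j : Fin p₂, ((X - Y) i j)^2
      ≥ ∑ i ∈ (S \ T) ∪ (T \ S), ∑ j : Fin p₂, ((X - Y) i j)^2 := by
        apply Finset.sum_le_sum_of_subset_of_nonneg (Finset.subset_univ _)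
        intro i _ _
        positivity
    _ = ∑ i ∈ (S \ T) ∪ (T \ S), ((r:ℝ) * a^2) :=
        Finset.sum_congr rfl hrow
    _ = (((S \ T) ∪ (T \ S)).card : ℝ) * ((r:ℝ) * a^2) := by
        rw [Finset.sum_const, nsmul_eq_mul]
    _ = (((S \ T).card + (T \ S).card : ℕ) : ℝ) * r * a^2 := by
        rw [Finset.card_union_of_disjoint (disjoint_sdiff_sdiff)]
        push_cast
        ring

-- distance when supports equal
lemma bmat_dist_signs (hrp : r ≤ p₂) (S : Finset (Fin p₁)) (hS : S.card = k)
    (σ τ : Fin k × Fin r → Bool) :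
    ∑ i : Fin p₁, ∑ j : Fin p₂,
        ((bmat (p₂ := p₂) k r a S hS σ - bmat (p₂ := p₂) k r a S hS τ) i j)^2
      ≥ (hammingDist σ τ : ℝ) * (4 * a^2) := by
  classical
  set X := bmat (p₂ := p₂) k r a S hS σ with hX
  set Y := bmat (p₂ := p₂) k r a S hS τ with hYd
  set g : Fin k × Fin r → Fin p₁ × Fin p₂ :=
    fun cj => ((S.orderIsoOfFin hS cj.1 : Fin p₁), Fin.castLE hrp cj.2) with hg
  have hginj : Function.Injective g := by
    intro x y hxy
    rw [hg] at hxy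
    have h1 : (S.orderIsoOfFin hS x.1 : Fin p₁) = (S.orderIsoOfFin hS y.1 : Fin p₁) :=
      congrArg Prod.fst hxy
    have h2 : Fin.castLE hrp x.2 = Fin.castLE hrp y.2 := congrArg Prod.snd hxy
    have e1 : x.1 = y.1 := by
      have := Subtype.ext h1
      exact (S.orderIsoOfFin hS).injective this
    have e2 : x.2 = y.2 := Fin.castLE_injective hrp h2
    exact Prod.ext e1 e2
  have hval : ∀ cj : Fin k × Fin r,
      ((X - Y) (g cj).1 (g cj).2)^2 = if σ cj ≠ τ cj then 4 * a^2 else 0 := by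
    intro ⟨c, j⟩
    have hi : (S.orderIsoOfFin hS c : Fin p₁) ∈ S := (S.orderIsoOfFin hS c).2
    have hj : ((Fin.castLE hrp j : Fin p₂) : ℕ) < r := j.2
    have hsymm : (S.orderIsoOfFin hS).symm ⟨(S.orderIsoOfFin hS c : Fin p₁), hi⟩ = c := by
      rw [show (⟨(S.orderIsoOfFin hS c : Fin p₁), hi⟩ : {x // x ∈ S}) = S.orderIsoOfFin hS c
        from rfl]
      exact (S.orderIsoOfFin hS).symm_apply_apply c
    have hjeq : (⟨((Fin.castLE hrp j : Fin p₂) : ℕ), hj⟩ : Fin r) = j := by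
      ext
      rfl
    have hXv : X (g (c,j)).1 (g (c,j)).2 = if σ (c, j) then a else -a := by
      rw [hX, hg]
      unfold bmat
      rw [dif_pos hi, dif_pos hj, hsymm, hjeq]
    have hYv : Y (g (c,j)).1 (g (c,j)).2 = if τ (c, j) then a else -a := by
      rw [hYd, hg]
      unfold bmat
      rw [dif_pos hi, dif_pos hj, hsymm, hjeq]
    rw [Matrix.sub_apply, hXv, hYv]
    by_cases h1 : σ (c, j) <;> by_cases h2 : τ (c, j) <;> simp [h1, h2] <;> ring
  calc ∑ i : Fin p₁, ∑ j : Fin p₂, ((X - Y) i j)^2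
      = ∑ ij : Fin p₁ × Fin p₂, ((X - Y) ij.1 ij.2)^2 := by
        rw [← Finset.sum_product']
        rfl
    _ ≥ ∑ ij ∈ Finset.image g Finset.univ, ((X - Y) ij.1 ij.2)^2 := by
        apply Finset.sum_le_sum_of_subset_of_nonneg (Finset.subset_univ _)
        intro i _ _
        positivity
    _ = ∑ cj : Fin k × Fin r, ((X - Y) (g cj).1 (g cj).2)^2 := by
        rw [Finset.sum_image (fun x _ y _ h => hginj h)]
    _ = ∑ cj : Fin k × Fin r, (if σ cj ≠ τ cj then 4 * a^2 else 0) :=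
        Finset.sum_congr rfl (fun cj _ => hval cj)
    _ = (hammingDist σ τ : ℝ) * (4 * a^2) := by
        rw [Finset.sum_ite, Finset.sum_const, Finset.sum_const_zero, add_zero, nsmul_eq_mul]
        congr 2

end dist
lemma log_le_two_sqrt {t : ℝ} (ht : 0 < t) : Real.log t ≤ 2 * Real.sqrt t := by
  have hst : 0 < Real.sqrt t := Real.sqrt_pos.2 ht
  have h1 : Real.log (Real.sqrt t) ≤ Real.sqrt t - 1 := Real.log_le_sub_one_of_pos hst
  have h2 : Real.log t = 2 * Real.log (Real.sqrt t) := by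
    rw [Real.log_sqrt ht.le]; ring
  linarith

lemma mul_log_div_le {s n : ℝ} (hs : 0 < s) (hn : s ≤ n) :
    s * Real.log (n/s) ≤ 2 * Real.sqrt (s*n) := by
  have hn0 : 0 < n := lt_of_lt_of_le hs hn
  have h1 : Real.log (n/s) ≤ 2 * Real.sqrt (n/s) := log_le_two_sqrt (by positivity)
  have h2 : s * Real.sqrt (n/s) = Real.sqrt (s*n) := by
    rw [show s * Real.sqrt (n/s) = Real.sqrt (s^2) * Real.sqrt (n/s) by
      rw [Real.sqrt_sq hs.le]]
    rw [← Real.sqrt_mul (by positivity)]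
    congr 1
    field_simp
  calc s * Real.log (n/s) ≤ s * (2 * Real.sqrt (n/s)) :=
        mul_le_mul_of_nonneg_left h1 hs.le
    _ = 2 * (s * Real.sqrt (n/s)) := by ring
    _ = 2 * Real.sqrt (s*n) := by rw [h2]
lemma bmat_col_zero {p₁ p₂ k r : ℕ} {a : ℝ} {S : Finset (Fin p₁)} {hS : S.card = k}
    {σ : Fin k × Fin r → Bool} (i : Fin p₁) (j : Fin p₂) (hj : r ≤ (j:ℕ)) :
    bmat k r a S hS σ i j = 0 := by
  unfold bmat
  by_cases hi : i ∈ S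
  · rw [dif_pos hi, dif_neg (by omega)]
  · rw [dif_neg hi]

lemma one_le_sum_choose (n t : ℕ) : 1 ≤ ∑ i ∈ Finset.range (t+1), n.choose i := by
  have h0 : (0:ℕ) ∈ Finset.range (t+1) := by simp
  have h := Finset.single_le_sum (f := fun i => n.choose i) (fun i _ => Nat.zero_le _) h0
  simpa using h


end AuxPacking

set_option maxHeartbeats 1000000 in
/-- existence of the packing set 𝕏″. -/
theorem packing_set_column_partition :
    ∃ c' : ℝ, 0 < c' ∧ c' < 1 ∧
    ∀ (p₁ p₂ k r : ℕ), 1 ≤ r → r ≤ k → (k : ℝ) ≤ c' * p₁ → r ≤ p₂ →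
    ∀ ε : ℝ, 0 < ε →
    ∃ 𝕏'' : Finset (Matrix (Fin p₁) (Fin p₂) ℝ),
      (∀ X ∈ 𝕏'', rowSparsity X ≤ k ∧ X.rank ≤ r ∧ frobNorm X = ε) ∧
      Real.log 𝕏''.card ≥ (4 / 25) * k * Real.log (p₁ / k) + (3 / 25) * r * k ∧
      ∀ X₁ ∈ 𝕏'', ∀ X₂ ∈ 𝕏'', X₁ ≠ X₂ → frobNorm (X₁ - X₂) ≥ ε / 2 := by
  classical
  refine ⟨1/100, by norm_num, by norm_num, ?_⟩
  intro p₁ p₂ k r hr1 hrk hkp hrp ε hε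
  have hk1 : 1 ≤ k := le_trans hr1 hrk
  have hp100 : 100 * k ≤ p₁ := by
    have : (100:ℝ) * k ≤ p₁ := by linarith
    exact_mod_cast this
  have hkp₁ : k ≤ p₁ := by omega
  have hkr1 : 1 ≤ k * r := Nat.one_le_iff_ne_zero.2 (by positivity)
  -- scale
  set a : ℝ := ε / Real.sqrt (k*r) with haa
  have hkrR : (0:ℝ) < (k:ℝ) * r := by
    have : (0:ℕ) < k * r := hkr1
    exact_mod_cast (by push_cast; exact_mod_cast this : (0:ℝ) < ((k*r : ℕ):ℝ))
  have ha : 0 < a := by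
    rw [haa]
    apply div_pos hε
    apply Real.sqrt_pos.2
    exact_mod_cast hkrR
  have hkra : (k:ℝ) * r * a^2 = ε^2 := by
    rw [haa, div_pow, Real.sq_sqrt (by positivity : (0:ℝ) ≤ (k:ℝ)*r)]
    field_simp
  -- code packing
  set m : ℕ := (k*r - 1)/16 with hm
  set HB : ℕ := ∑ i ∈ Finset.range (m+1), (k*r).choose i with hHB
  haveI : DecidableRel (fun σ τ : Fin k × Fin r → Bool => hammingDist σ τ ≤ m) :=
    fun _ _ => inferInstance
  obtain ⟨Cd, -, hCsep, hCcard⟩ := exists_packing (Finset.univ : Finset (Fin k × Fin r → Bool))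
    (fun σ τ => hammingDist σ τ ≤ m)
    (fun x y h => by simpa only [hammingDist_comm] using h)
    (fun x => by simp only [hammingDist_self]; omega)
    HB
    (fun x _ => by
      have h2 := hamming_ball_le m x
      rw [Fintype.card_prod, Fintype.card_fin, Fintype.card_fin] at h2
      rw [hHB]
      refine le_trans (le_of_eq (congrArg Finset.card ?_)) h2
      ext y
      simp only [Finset.mem_filter])
  rw [Finset.card_univ, Fintype.card_fun, Fintype.card_bool, Fintype.card_prod,
    Fintype.card_fin, Fintype.card_fin] at hCcard
  -- support packing
  set s : ℕ := (k - 1)/8 with hs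
  set SB : ℕ := (∑ i ∈ Finset.range (s+1), k.choose i) * (∑ i ∈ Finset.range (s+1), p₁.choose i)
    with hSB
  haveI : DecidableRel (fun S T : Finset (Fin p₁) => (S \ T).card ≤ s ∧ (T \ S).card ≤ s) :=
    fun _ _ => inferInstance
  obtain ⟨𝒮, h𝒮V, h𝒮sep, h𝒮card⟩ := exists_packing
    (Finset.powersetCard k (Finset.univ : Finset (Fin p₁)))
    (fun S T => (S \ T).card ≤ s ∧ (T \ S).card ≤ s)
    (fun x y h => ⟨h.2, h.1⟩)
    (fun x => by simp)
    SB
    (fun S hS => by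
      rw [Finset.mem_powersetCard] at hS
      have h2 := support_ball_le p₁ k s S hS.2
      rw [hSB]
      refine le_trans (le_of_eq (congrArg Finset.card ?_)) h2
      ext y
      simp only [Finset.mem_filter])
  rw [Finset.card_powersetCard, Finset.card_univ, Fintype.card_fin] at h𝒮card
  have hSk : ∀ S ∈ 𝒮, S.card = k := by
    intro S hS
    have := h𝒮V hS
    rw [Finset.mem_powersetCard] at this
    exact this.2
  -- the map
  set F : Finset (Fin p₁) × (Fin k × Fin r → Bool) → Matrix (Fin p₁) (Fin p₂) ℝ :=
    fun P => if h : P.1.card = k then bmat k r a P.1 h P.2 else 0 with hF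
  -- separation
  have hsep : ∀ P ∈ 𝒮 ×ˢ Cd, ∀ Q ∈ 𝒮 ×ˢ Cd, P ≠ Q →
      (ε/2)^2 ≤ ∑ i : Fin p₁, ∑ j : Fin p₂, ((F P - F Q) i j)^2 := by
    rintro ⟨S, σ⟩ hP ⟨T, τ⟩ hQ hPQ
    rw [Finset.mem_product] at hP hQ
    have hSk' : S.card = k := hSk S hP.1
    have hTk' : T.card = k := hSk T hQ.1
    have hFP : F (S, σ) = bmat k r a S hSk' σ := by rw [hF]; exact dif_pos hSk'
    have hFQ : F (T, τ) = bmat k r a T hTk' τ := by rw [hF]; exact dif_pos hTk'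
    rw [hFP, hFQ]
    have ha2 : (0:ℝ) < a^2 := by positivity
    by_cases hST : S = T
    · subst hST
      have hbm : bmat (p₂ := p₂) k r a S hTk' τ = bmat k r a S hSk' τ := rfl
      rw [hbm]
      have hστ : σ ≠ τ := by
        intro h
        exact hPQ (by rw [h])
      have hfar : ¬ (hammingDist σ τ ≤ m) := hCsep σ hP.2 τ hQ.2 hστ
      have hdn : m + 1 ≤ hammingDist σ τ := by omega
      have hH : ((m:ℝ)+1) ≤ (hammingDist σ τ : ℝ) := by exact_mod_cast hdn
      have h16n : k * r ≤ 16 * (m + 1) := by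
        rw [hm]
        omega
      have h16 : ((k:ℝ) * r) ≤ 16 * ((m:ℝ)+1) := by exact_mod_cast h16n
      have hb := bmat_dist_signs (a := a) hrp S hSk' σ τ
      calc (ε/2)^2 = ε^2/4 := by ring
        _ = (k:ℝ)*r*a^2/4 := by rw [← hkra]
        _ ≤ (16*((m:ℝ)+1))*a^2/4 := by
            have h' := mul_le_mul_of_nonneg_right h16 (by positivity : (0:ℝ) ≤ a^2/4)
            linarith
        _ = ((m:ℝ)+1)*(4*a^2) := by ring
        _ ≤ (hammingDist σ τ : ℝ)*(4*a^2) :=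
            mul_le_mul_of_nonneg_right hH (by positivity)
        _ ≤ _ := hb
    · have hfar := h𝒮sep S hP.1 T hQ.1 hST
      have heq : (S \ T).card = (T \ S).card :=
        Finset.card_sdiff_comm (hSk'.trans hTk'.symm)
      have hcard : 2 * (s + 1) ≤ (S \ T).card + (T \ S).card := by
        rcases not_and_or.1 hfar with h | h
        · omega
        · omega
      have h8n : k ≤ 8 * (s + 1) := by
        rw [hs]
        omega
      have h8 : (k:ℝ) ≤ 8 * ((s:ℝ)+1) := by exact_mod_cast h8n
      have hcardR : 2*((s:ℝ)+1) ≤ (((S \ T).card + (T \ S).card : ℕ):ℝ) := by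
        exact_mod_cast hcard
      have hb := bmat_dist_supports (a := a) hrp S T hSk' hTk' σ τ
      have hr1R : (1:ℝ) ≤ (r:ℝ) := by exact_mod_cast hr1
      calc (ε/2)^2 = ε^2/4 := by ring
        _ = (k:ℝ)*r*a^2/4 := by rw [← hkra]
        _ ≤ (8*((s:ℝ)+1))*r*a^2/4 := by
            have h' := mul_le_mul_of_nonneg_right h8 (by positivity : (0:ℝ) ≤ (r:ℝ)*a^2/4)
            linarith
        _ = (2*((s:ℝ)+1))*(r*a^2) := by ring
        _ ≤ (((S \ T).card + (T \ S).card : ℕ):ℝ)*(r*a^2) :=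
            mul_le_mul_of_nonneg_right hcardR (by positivity)
        _ = (((S \ T).card + (T \ S).card : ℕ):ℝ)*r*a^2 := by ring
        _ ≤ _ := hb
  have hfrobsep : ∀ P ∈ 𝒮 ×ˢ Cd, ∀ Q ∈ 𝒮 ×ˢ Cd, P ≠ Q →
      frobNorm (F P - F Q) ≥ ε/2 := by
    intro P hP Q hQ hPQ
    have h := hsep P hP Q hQ hPQ
    calc ε/2 = Real.sqrt ((ε/2)^2) := (Real.sqrt_sq (by positivity)).symm
      _ ≤ Real.sqrt (∑ i : Fin p₁, ∑ j : Fin p₂, ((F P - F Q) i j)^2) :=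
          Real.sqrt_le_sqrt h
      _ = frobNorm (F P - F Q) := rfl
  have hinj : Set.InjOn F ↑(𝒮 ×ˢ Cd) := by
    intro P hP Q hQ hPQeq
    by_contra hne
    have := hfrobsep P (by exact_mod_cast hP) Q (by exact_mod_cast hQ) hne
    rw [hPQeq] at this
    have hzero : frobNorm (F Q - F Q) = 0 := by
      rw [sub_self]
      unfold frobNorm
      simp
    rw [hzero] at this
    linarith
  refine ⟨(𝒮 ×ˢ Cd).image F, ?_, ?_, ?_⟩
  · -- property (i)
    intro X hX
    rw [Finset.mem_image] at hX
    obtain ⟨⟨S, σ⟩, hP, rfl⟩ := hX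
    rw [Finset.mem_product] at hP
    have hSk' : S.card = k := hSk S hP.1
    have hFP : F (S, σ) = bmat k r a S hSk' σ := by rw [hF]; exact dif_pos hSk'
    rw [hFP]
    refine ⟨?_, ?_, ?_⟩
    · have hset : {i | bmat (p₂ := p₂) k r a S hSk' σ i ≠ 0} = ↑S := by
        ext i
        simp only [Set.mem_setOf_eq, Finset.mem_coe]
        constructor
        · intro h
          by_contra hi
          exact h (bmat_row_zero hi)
        · intro hi
          exact bmat_row_ne_zero hr1 hrp (ne_of_gt ha) hi
      unfold rowSparsity
      rw [hset, Set.ncard_coe_finset, hSk']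
    · exact rank_le_of_cols_zero hrp _ (fun i j hj => bmat_col_zero i j hj)
    · unfold frobNorm
      rw [bmat_frob_sq hrp, hkra, Real.sqrt_sq hε.le]
  · -- property (ii)
    have hcard𝕏 : ((𝒮 ×ˢ Cd).image F).card = 𝒮.card * Cd.card := by
      rw [Finset.card_image_of_injOn hinj, Finset.card_product]
    set L : ℝ := Real.log ((p₁:ℝ)/k) with hL
    -- positivity facts
    have hchoosepos : 0 < p₁.choose k := Nat.choose_pos hkp₁
    have hSBpos : 1 ≤ SB := by
      rw [hSB]
      exact Nat.one_le_iff_ne_zero.2 (Nat.mul_ne_zero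
        (by have := one_le_sum_choose k s; omega)
        (by have := one_le_sum_choose p₁ s; omega))
    have hHBpos : 1 ≤ HB := by
      rw [hHB]
      exact one_le_sum_choose (k*r) m
    have h𝒮pos : 1 ≤ 𝒮.card := by
      rcases Nat.eq_zero_or_pos 𝒮.card with h0 | h1
      · rw [h0, Nat.zero_mul] at h𝒮card
        omega
      · exact h1
    have hCpos : 1 ≤ Cd.card := by
      rcases Nat.eq_zero_or_pos Cd.card with h0 | h1
      · rw [h0, Nat.zero_mul] at hCcard
        have h2 : 0 < 2^(k*r) := by positivity
        omega
      · exact h1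
    have hkR : (0:ℝ) < k := by exact_mod_cast hk1
    have hrR : (0:ℝ) < r := by exact_mod_cast hr1
    have hp₁R : (0:ℝ) < p₁ := by
      have : 0 < p₁ := by omega
      exact_mod_cast this
    have hpkpos : (0:ℝ) < (p₁:ℝ)/k := by positivity
    -- L ≥ 6 log 2
    have hL6 : 6 * Real.log 2 ≤ L := by
      have h64 : (64:ℝ) ≤ (p₁:ℝ)/k := by
        rw [le_div_iff₀ hkR]
        have : (100:ℝ)*k ≤ p₁ := by exact_mod_cast hp100
        linarith [hkR.le]
      have := Real.log_le_log (by norm_num : (0:ℝ) < 64) h64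
      calc 6 * Real.log 2 = Real.log ((2:ℝ)^(6:ℕ)) := by
            rw [Real.log_pow]; push_cast; ring
        _ = Real.log 64 := by norm_num
        _ ≤ L := this
    have hlog2 : (0.6931471803:ℝ) ≤ Real.log 2 := Real.log_two_gt_d9.le
    have hL0 : 0 ≤ L := by linarith
    -- (A) lower bound for log Cd.card
    have hA : (3/25:ℝ) * (k*r) ≤ Real.log Cd.card := by
      have hcast : ((2:ℝ))^(k*r) ≤ (Cd.card : ℝ) * HB := by
        exact_mod_cast hCcard
      have hlogA : ((k*r:ℕ):ℝ) * Real.log 2 ≤ Real.log Cd.card + Real.log HB := by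
        have h1 := Real.log_le_log (by positivity) hcast
        rw [Real.log_pow, Real.log_mul (by positivity) (by
          have : (0:ℝ) < HB := by exact_mod_cast hHBpos
          positivity)] at h1
        exact h1
      have hkrcast : ((k*r:ℕ):ℝ) = (k:ℝ)*r := by push_cast; ring
      have hHBlog : Real.log HB ≤ (k:ℝ)*r/2 + (k:ℝ)*r/16 := by
        by_cases hm0 : m = 0
        · have : HB = 1 := by
            rw [hHB, hm0, Finset.sum_range_one, Nat.choose_zero_right]
          rw [this]
          simp only [Nat.cast_one, Real.log_one]
          positivity
        · have hm1 : 1 ≤ m := by omega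
          have hmn : m ≤ k*r := by
            rw [hm]; omega
          have h16m : 16*m ≤ k*r := by
            rw [hm]; omega
          have hmR : (m:ℝ) ≤ (k:ℝ)*r/16 := by
            have : (16:ℝ)*m ≤ (k:ℝ)*r := by exact_mod_cast h16m
            linarith
          have hHBle : (HB:ℝ) ≤ (((k*r:ℕ):ℝ)/m)^m * Real.exp m := by
            rw [hHB]
            push_cast
            exact_mod_cast sum_choose_le (k*r) m hm1 hmn
          have hmpos : (0:ℝ) < m := by exact_mod_cast hm1
          have hlogHB : Real.log HB ≤ (m:ℝ) * Real.log (((k*r:ℕ):ℝ)/m) + m := by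
            have h2 := Real.log_le_log (by
              have : (0:ℝ) < HB := by exact_mod_cast hHBpos
              exact this) hHBle
            rw [Real.log_mul (by positivity) (Real.exp_ne_zero _), Real.log_pow,
              Real.log_exp] at h2
            exact h2
          have hml : (m:ℝ) * Real.log (((k*r:ℕ):ℝ)/m) ≤ 2 * Real.sqrt ((m:ℝ) * ((k*r:ℕ):ℝ)) := by
            apply mul_log_div_le hmpos
            rw [hkrcast]
            exact le_trans hmR (by linarith [hkrR.le])
          have hsq : Real.sqrt ((m:ℝ) * ((k*r:ℕ):ℝ)) ≤ (k:ℝ)*r/4 := by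
            rw [show (k:ℝ)*r/4 = Real.sqrt (((k:ℝ)*r/4)^2) by
              rw [Real.sqrt_sq (by positivity)]]
            apply Real.sqrt_le_sqrt
            rw [hkrcast]
            linarith [mul_le_mul_of_nonneg_right hmR hkrR.le]
          calc Real.log HB ≤ (m:ℝ) * Real.log (((k*r:ℕ):ℝ)/m) + m := hlogHB
            _ ≤ 2 * Real.sqrt ((m:ℝ) * ((k*r:ℕ):ℝ)) + m := by linarith
            _ ≤ 2 * ((k:ℝ)*r/4) + (k:ℝ)*r/16 := by linarith
            _ = (k:ℝ)*r/2 + (k:ℝ)*r/16 := by ring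
      rw [hkrcast] at hlogA
      have hkr0 : (0:ℝ) ≤ (k:ℝ)*r := by positivity
      linarith [mul_le_mul_of_nonneg_left hlog2 hkr0]
    -- (B) lower bound for log 𝒮.card
    have hB : (4/25:ℝ) * k * L ≤ Real.log 𝒮.card := by
      have hchoose := pow_div_le_choose k hk1 p₁ hkp₁
      have hlogchoose : (k:ℝ) * L ≤ Real.log (p₁.choose k) := by
        have h1 := Real.log_le_log (by positivity) hchoose
        rw [Real.log_pow] at h1
        rw [hL]
        exact h1
      have hlogprod : Real.log (p₁.choose k) ≤ Real.log 𝒮.card + Real.log SB := by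
        have hcast : ((p₁.choose k : ℕ):ℝ) ≤ (𝒮.card:ℝ) * SB := by exact_mod_cast h𝒮card
        have h1 := Real.log_le_log (by exact_mod_cast hchoosepos) hcast
        rw [Real.log_mul (by
            have : (0:ℝ) < 𝒮.card := by exact_mod_cast h𝒮pos
            positivity)
          (by
            have : (0:ℝ) < SB := by exact_mod_cast hSBpos
            positivity)] at h1
        exact h1
      have hSBlog : Real.log SB ≤ (k:ℝ)/8 * L + (169/100:ℝ) * k := by
        by_cases hs0 : s = 0
        · have : SB = 1 := by
            rw [hSB, hs0]
            simp
          rw [this]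
          simp only [Nat.cast_one, Real.log_one]
          have : (0:ℝ) ≤ (k:ℝ)/8 * L := by positivity
          linarith
        · have hs1 : 1 ≤ s := by omega
          have hsk : s ≤ k := by rw [hs]; omega
          have hsp : s ≤ p₁ := by omega
          have h8s : 8*s ≤ k := by rw [hs]; omega
          have hs8R : (s:ℝ) ≤ (k:ℝ)/8 := by
            have : (8:ℝ)*s ≤ (k:ℝ) := by exact_mod_cast h8s
            linarith
          have hspos : (0:ℝ) < s := by exact_mod_cast hs1
          set B₁ : ℕ := ∑ i ∈ Finset.range (s+1), k.choose i with hB₁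
          set B₂ : ℕ := ∑ i ∈ Finset.range (s+1), p₁.choose i with hB₂
          have hB₁pos : (0:ℝ) < B₁ := by
            have h1 : 1 ≤ B₁ := by rw [hB₁]; exact one_le_sum_choose k s
            exact_mod_cast h1
          have hB₂pos : (0:ℝ) < B₂ := by
            have h1 : 1 ≤ B₂ := by rw [hB₂]; exact one_le_sum_choose p₁ s
            exact_mod_cast h1
          have hSBmul : SB = B₁ * B₂ := by rw [hSB, hB₁, hB₂]
          have hSBsplit : Real.log SB = Real.log B₁ + Real.log B₂ := by
            rw [hSBmul, Nat.cast_mul, Real.log_mul hB₁pos.ne' hB₂pos.ne']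
          have hlogB₁ : Real.log B₁ ≤ (s:ℝ) * Real.log ((k:ℝ)/s) + s := by
            have hle : (B₁:ℝ) ≤ ((k:ℝ)/s)^s * Real.exp s := by
              rw [hB₁]
              push_cast
              exact_mod_cast sum_choose_le k s hs1 hsk
            have h1 := Real.log_le_log hB₁pos hle
            rw [Real.log_mul (by positivity) (Real.exp_ne_zero _), Real.log_pow,
              Real.log_exp] at h1
            exact h1
          have hlogB₂ : Real.log B₂ ≤ (s:ℝ) * Real.log ((p₁:ℝ)/s) + s := by
            have hle : (B₂:ℝ) ≤ ((p₁:ℝ)/s)^s * Real.exp s := by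
              rw [hB₂]
              push_cast
              exact_mod_cast sum_choose_le p₁ s hs1 hsp
            have h1 := Real.log_le_log hB₂pos hle
            rw [Real.log_mul (by positivity) (Real.exp_ne_zero _), Real.log_pow,
              Real.log_exp] at h1
            exact h1
          have hks : s * Real.log ((k:ℝ)/s) ≤ (18/25:ℝ)*k := by
            have h1 : (s:ℝ) * Real.log ((k:ℝ)/s) ≤ 2 * Real.sqrt ((s:ℝ)*k) :=
              mul_log_div_le hspos (by exact_mod_cast hsk)
            have h2 : Real.sqrt ((s:ℝ)*k) ≤ (9/25:ℝ)*k := by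
              rw [show (9/25:ℝ)*k = Real.sqrt (((9/25:ℝ)*k)^2) by
                rw [Real.sqrt_sq (by positivity)]]
              apply Real.sqrt_le_sqrt
              nlinarith [mul_le_mul_of_nonneg_right hs8R hkR.le, sq_nonneg (k:ℝ)]
            linarith
          have hsplitlog : Real.log ((p₁:ℝ)/s) = L + Real.log ((k:ℝ)/s) := by
            rw [hL, ← Real.log_mul (by positivity) (by positivity)]
            congr 1
            field_simp
          have hsL : (s:ℝ) * L ≤ (k:ℝ)/8 * L :=
            mul_le_mul_of_nonneg_right hs8R hL0
          have hslogp : (s:ℝ) * Real.log ((p₁:ℝ)/s) ≤ (k:ℝ)/8 * L + (18/25:ℝ)*k := by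
            rw [hsplitlog, mul_add]
            linarith
          calc Real.log SB = Real.log B₁ + Real.log B₂ := hSBsplit
            _ ≤ ((s:ℝ) * Real.log ((k:ℝ)/s) + s) + ((s:ℝ) * Real.log ((p₁:ℝ)/s) + s) := by
                linarith
            _ ≤ ((18/25:ℝ)*k + (k:ℝ)/8) + (((k:ℝ)/8 * L + (18/25:ℝ)*k) + (k:ℝ)/8) := by
                linarith
            _ = (k:ℝ)/8 * L + (169/100:ℝ) * k := by ring
      -- combine
      have hL415 : (83/20:ℝ) ≤ L := by linarith
      have hfinal : (4/25:ℝ) * k * L ≤ (k:ℝ) * L - ((k:ℝ)/8 * L + (169/100:ℝ) * k) := by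
        linarith [mul_le_mul_of_nonneg_left hL415 hkR.le]
      linarith
    -- combine A and B
    rw [hcard𝕏]
    have hlogsplit : Real.log ((𝒮.card * Cd.card : ℕ):ℝ) =
        Real.log 𝒮.card + Real.log Cd.card := by
      rw [Nat.cast_mul]
      rw [Real.log_mul (by
          have : (0:ℝ) < 𝒮.card := by exact_mod_cast h𝒮pos
          positivity)
        (by
          have : (0:ℝ) < Cd.card := by exact_mod_cast hCpos
          positivity)]
    rw [ge_iff_le, hlogsplit]
    have : (3/25:ℝ) * r * k = (3/25:ℝ) * (k*r) := by ring
    rw [this]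
    rw [hL] at hB
    linarith
  · -- property (iii)
    intro X₁ hX₁ X₂ hX₂ hX12
    rw [Finset.mem_image] at hX₁ hX₂
    obtain ⟨P, hP, rfl⟩ := hX₁
    obtain ⟨Q, hQ, rfl⟩ := hX₂
    exact hfrobsep P hP Q hQ (fun h => hX12 (congrArg F h))
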